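/- For each integer n ≥ 6, there exists a 3-graph H on n vertices with δ₂(H) = ⌊n/3⌋ − 1 such that every tight component of H spans at most 2⌈n/3⌉ vertices; that is, for every tight component T of H, the set of vertices contained in some edge of T has size at most 2⌈n/3⌉. (Such a 3-graph is obtained by partitioning the vertices into sets X, Y, Z with sizes as equal as possible and taking as edges all triples with two vertices in X and one in Y, two in Y and one in Z, or two in Z and one in X.) -/

import Mathlib

namespace St4

def reg (n : ℕ) (v : Fin n) : ℕ :=
  if v.val < n / 3 then 0 else if v.val < n / 3 + (n + 1) / 3 then 1 else 2

def cnt (n i : ℕ) (e : Finset (Fin n)) : ℕ := (e.filter fun v => reg n v = i).card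

def pat (n : ℕ) (e : Finset (Fin n)) : Prop :=
  (cnt n 0 e = 2 ∧ cnt n 1 e = 1) ∨ (cnt n 1 e = 2 ∧ cnt n 2 e = 1) ∨
    (cnt n 2 e = 2 ∧ cnt n 0 e = 1)

instance (n : ℕ) : DecidablePred (pat n) := fun e => by unfold pat; infer_instance

lemma reg_cases (n : ℕ) (v : Fin n) : reg n v = 0 ∨ reg n v = 1 ∨ reg n v = 2 := by
  unfold reg; split_ifs <;> simp

lemma reg0_iff (n : ℕ) (v : Fin n) : reg n v = 0 ↔ v.val < n / 3 := by
  unfold reg; split_ifs <;> simp <;> omega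

lemma reg1_iff (n : ℕ) (v : Fin n) : reg n v = 1 ↔ n / 3 ≤ v.val ∧ v.val < n / 3 + (n + 1) / 3 := by
  unfold reg; split_ifs <;> simp <;> omega

lemma reg2_iff (n : ℕ) (v : Fin n) : reg n v = 2 ↔ n / 3 + (n + 1) / 3 ≤ v.val := by
  unfold reg; split_ifs <;> simp <;> omega

lemma cnt_sum (n : ℕ) (e : Finset (Fin n)) :
    cnt n 0 e + cnt n 1 e + cnt n 2 e = e.card := by
  classical
  simp only [cnt, Finset.card_filter]
  rw [← Finset.sum_add_distrib, ← Finset.sum_add_distrib, Finset.card_eq_sum_ones]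
  refine Finset.sum_congr rfl fun v _ => ?_
  rcases reg_cases n v with h | h | h <;> simp [h]

lemma cnt_insert (n i : ℕ) (w x y : Fin n) (hwx : w ≠ x) (hwy : w ≠ y) (hxy : x ≠ y) :
    cnt n i {w, x, y} =
      (if reg n w = i then 1 else 0) + (if reg n x = i then 1 else 0) +
        (if reg n y = i then 1 else 0) := by
  classical
  simp only [cnt, Finset.filter_insert, Finset.filter_singleton]
  split_ifs <;>
    simp_all [Finset.card_insert_of_notMem, hwx, hwy, hxy] <;> omega

lemma not_reg {n i : ℕ} {e : Finset (Fin n)} (h : cnt n i e = 0) {v : Fin n} (hv : v ∈ e) :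
    reg n v ≠ i := by
  intro hr
  have : v ∈ e.filter fun v => reg n v = i := Finset.mem_filter.2 ⟨hv, hr⟩
  rw [cnt, Finset.card_eq_zero] at h
  simp [h] at this

lemma inter_le {n m : ℕ} {e f : Finset (Fin n)} (h : ∀ v ∈ e ∩ f, reg n v = m) :
    (e ∩ f).card ≤ cnt n m e ∧ (e ∩ f).card ≤ cnt n m f := by
  constructor <;> apply Finset.card_le_card <;> intro v hv <;>
    exact Finset.mem_filter.2 ⟨by simp_all [Finset.mem_inter] , h v hv⟩

lemma touch_same {n : ℕ} {e f : Finset (Fin n)} (he : pat n e) (hf : pat n f)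
    (hce : e.card = 3) (hcf : f.card = 3) (hint : (e ∩ f).card = 2) :
    (cnt n 0 e = 2 ∧ cnt n 0 f = 2) ∨ (cnt n 1 e = 2 ∧ cnt n 1 f = 2) ∨
      (cnt n 2 e = 2 ∧ cnt n 2 f = 2) := by
  have hse := cnt_sum n e
  have hsf := cnt_sum n f
  rw [hce] at hse; rw [hcf] at hsf
  have step : ∀ m ze zf, cnt n ze e = 0 → cnt n zf f = 0 → ze ≠ m → zf ≠ m →
      ze ≠ zf → (ze = 0 ∨ ze = 1 ∨ ze = 2) → (zf = 0 ∨ zf = 1 ∨ zf = 2) →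
      (m = 0 ∨ m = 1 ∨ m = 2) →
      (e ∩ f).card ≤ cnt n m e ∧ (e ∩ f).card ≤ cnt n m f := by
    intro m ze zf h1 h2 hzm hzm' hzz hz hz' hm
    apply inter_le
    intro v hv
    have h3 := not_reg h1 (Finset.mem_of_mem_inter_left hv)
    have h4 := not_reg h2 (Finset.mem_of_mem_inter_right hv)
    rcases reg_cases n v with h | h | h <;> omega
  rcases he with ⟨h1, h2⟩ | ⟨h1, h2⟩ | ⟨h1, h2⟩ <;>
    rcases hf with ⟨h3, h4⟩ | ⟨h3, h4⟩ | ⟨h3, h4⟩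
  · exact Or.inl ⟨h1, h3⟩
  · have := step 1 2 0 (by omega) (by omega) (by omega) (by omega) (by omega)
      (by omega) (by omega) (by omega)
    omega
  · have := step 0 2 1 (by omega) (by omega) (by omega) (by omega) (by omega)
      (by omega) (by omega) (by omega)
    omega
  · have := step 1 0 2 (by omega) (by omega) (by omega) (by omega) (by omega)
      (by omega) (by omega) (by omega)
    omega
  · exact Or.inr (Or.inl ⟨h1, h3⟩)
  · have := step 2 0 1 (by omega) (by omega) (by omega) (by omega) (by omega)
      (by omega) (by omega) (by omega)
    omega
  · have := step 0 1 2 (by omega) (by omega) (by omega) (by omega) (by omega)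
      (by omega) (by omega) (by omega)
    omega
  · have := step 2 1 0 (by omega) (by omega) (by omega) (by omega) (by omega)
      (by omega) (by omega) (by omega)
    omega
  · exact Or.inr (Or.inr ⟨h1, h3⟩)

lemma card_val_filter (n : ℕ) (p : ℕ → Prop) [DecidablePred p] :
    (Finset.univ.filter fun v : Fin n => p v.val).card = ((Finset.range n).filter p).card := by
  apply Finset.card_bij (fun v _ => v.val)
  · intro v hv; simp_all [Finset.mem_filter, Finset.mem_range, v.isLt]
  · intro a ha b hb h; exact Fin.val_injective h
  · intro b hb
    simp only [Finset.mem_filter, Finset.mem_range] at hb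
    exact ⟨⟨b, hb.1⟩, by simp [hb.2], rfl⟩

lemma card_lt (n m : ℕ) (hm : m ≤ n) :
    (Finset.univ.filter fun v : Fin n => v.val < m).card = m := by
  rw [card_val_filter n (fun k => k < m)]
  have : (Finset.range n).filter (fun k => k < m) = Finset.range m := by
    ext k; simp only [Finset.mem_filter, Finset.mem_range]; omega
  rw [this, Finset.card_range]

lemma card_ico (n a b : ℕ) (hb : b ≤ n) :
    (Finset.univ.filter fun v : Fin n => a ≤ v.val ∧ v.val < b).card = b - a := by
  rw [card_val_filter n (fun k => a ≤ k ∧ k < b)]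
  have : (Finset.range n).filter (fun k => a ≤ k ∧ k < b) = Finset.Ico a b := by
    ext k; simp only [Finset.mem_filter, Finset.mem_range, Finset.mem_Ico]; omega
  rw [this, Nat.card_Ico]

end St4

/-- Two edges of a 3-graph with edge set `E` *touch* if they both lie in `E` and
intersect in exactly two vertices. -/
def Touches {V : Type*} [DecidableEq V] (E : Finset (Finset V)) (e f : Finset V) : Prop :=
  e ∈ E ∧ f ∈ E ∧ (e ∩ f).card = 2

/-- for each `n ≥ 6` there is a 3-graph on `n` vertices with minimum codegree
exactly `⌊n/3⌋ - 1` in which every tight component spans at most `2⌈n/3⌉` vertices. -/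
theorem statement4 (n : ℕ) (hn : 6 ≤ n) :
    ∃ E : Finset (Finset (Fin n)),
      (∀ e ∈ E, e.card = 3) ∧
      (∀ x y : Fin n, x ≠ y → n / 3 - 1 ≤ (E.filter fun e => x ∈ e ∧ y ∈ e).card) ∧
      (∃ x y : Fin n, x ≠ y ∧ (E.filter fun e => x ∈ e ∧ y ∈ e).card = n / 3 - 1) ∧
      ∀ e ∈ E,
        ({v : Fin n | ∃ f ∈ E, Relation.ReflTransGen (Touches E) e f ∧ v ∈ f}).ncard
          ≤ 2 * ((n + 2) / 3) := by
  classical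
  set a := n / 3 with ha
  set b := n / 3 + (n + 1) / 3 with hb
  set E : Finset (Finset (Fin n)) :=
    (Finset.univ.powersetCard 3).filter (fun e => St4.pat n e) with hE
  have hmemE : ∀ e : Finset (Fin n), e ∈ E ↔ e.card = 3 ∧ St4.pat n e := by
    intro e
    rw [hE, Finset.mem_filter, Finset.mem_powersetCard_univ]

  -- cardinalities of the three regions
  have hR0 : (Finset.univ.filter fun v : Fin n => St4.reg n v = 0).card = a := by
    have : (Finset.univ.filter fun v : Fin n => St4.reg n v = 0)
        = Finset.univ.filter fun v : Fin n => v.val < a := by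
      apply Finset.filter_congr; intro v _; simp [St4.reg0_iff, ha]
    rw [this, St4.card_lt n a (by omega)]
  have hR1 : (Finset.univ.filter fun v : Fin n => St4.reg n v = 1).card = b - a := by
    have : (Finset.univ.filter fun v : Fin n => St4.reg n v = 1)
        = Finset.univ.filter fun v : Fin n => a ≤ v.val ∧ v.val < b := by
      apply Finset.filter_congr; intro v _; simp [St4.reg1_iff, ha, hb]
    rw [this, St4.card_ico n a b (by omega)]
  have hR2 : (Finset.univ.filter fun v : Fin n => St4.reg n v = 2).card = n - b := by
    have : (Finset.univ.filter fun v : Fin n => St4.reg n v = 2)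
        = Finset.univ.filter fun v : Fin n => b ≤ v.val ∧ v.val < n := by
      apply Finset.filter_congr; intro v _; simp [St4.reg2_iff, v.isLt, hb]
    rw [this, St4.card_ico n b n le_rfl]
  -- the general codegree lower bound
  have key : ∀ (x y : Fin n), x ≠ y → ∀ j : ℕ, j < 3 →
      (St4.reg n x ≠ j ∨ St4.reg n y ≠ j) →
      (∀ w : Fin n, w ≠ x → w ≠ y → St4.reg n w = j → St4.pat n {w, x, y}) →
      n / 3 - 1 ≤ (E.filter fun e => x ∈ e ∧ y ∈ e).card := by
    intro x y hxy j hj hone hpat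
    set Rj := Finset.univ.filter fun v : Fin n => St4.reg n v = j with hRj
    have hRjcard : a ≤ Rj.card := by
      interval_cases j <;> simp only [hRj] <;> omega
    set W := (Rj.erase x).erase y with hW
    have hWcard : a - 1 ≤ W.card := by
      rcases hone with h | h
      · have hx : x ∉ Rj := by simp [hRj, h]
        rw [hW, Finset.erase_eq_of_notMem hx]
        have := Finset.pred_card_le_card_erase (s := Rj) (a := y)
        omega
      · have hy : y ∉ (Rj.erase x) := by
          simp only [Finset.mem_erase, hRj, Finset.mem_filter]
          tauto
        rw [hW, Finset.erase_eq_of_notMem hy]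
        have := Finset.pred_card_le_card_erase (s := Rj) (a := x)
        omega
    have : W.card ≤ (E.filter fun e => x ∈ e ∧ y ∈ e).card := by
      apply Finset.card_le_card_of_injOn (fun w => {w, x, y})
      · intro w hw
        have hwx : w ≠ x := by
          simp only [hW, Finset.mem_coe, Finset.mem_erase] at hw; exact hw.2.1
        have hwy : w ≠ y := by
          simp only [hW, Finset.mem_coe, Finset.mem_erase] at hw; exact hw.1
        have hwr : St4.reg n w = j := by
          simp only [hW, Finset.mem_coe, Finset.mem_erase, hRj, Finset.mem_filter] at hw
          exact hw.2.2.2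
        refine Finset.mem_filter.2 ⟨(hmemE _).2 ⟨?_, hpat w hwx hwy hwr⟩, by simp, by simp⟩
        rw [Finset.card_insert_of_notMem (by simp [hwx, hwy]),
          Finset.card_insert_of_notMem (by simp [hxy]), Finset.card_singleton]
      · intro w1 h1 w2 h2 heq
        have h1' : w1 ∈ W := Finset.mem_coe.1 h1
        have hwx : w1 ≠ x ∧ w1 ≠ y := by
          simp only [hW, Finset.mem_erase] at h1'; exact ⟨h1'.2.1, h1'.1⟩
        have heq' : ({w1, x, y} : Finset (Fin n)) = {w2, x, y} := heq
        have : w1 ∈ ({w2, x, y} : Finset (Fin n)) := by rw [← heq']; simp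
        simp only [Finset.mem_insert, Finset.mem_singleton] at this
        tauto
    omega
  have hdeg : ∀ x y : Fin n, x ≠ y →
      n / 3 - 1 ≤ (E.filter fun e => x ∈ e ∧ y ∈ e).card := by
    intro x y hxy
    have tri : ∀ (w : Fin n), w ≠ x → w ≠ y → ∀ i,
        St4.cnt n i {w, x, y} =
          (if St4.reg n w = i then 1 else 0) + (if St4.reg n x = i then 1 else 0) +
            (if St4.reg n y = i then 1 else 0) :=
      fun w hwx hwy i => St4.cnt_insert n i w x y hwx hwy hxy
    rcases St4.reg_cases n x with hx | hx | hx <;> rcases St4.reg_cases n y with hy | hy | hy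
    · exact key x y hxy 1 (by omega) (by omega)
        (fun w hwx hwy hw => by simp [St4.pat, tri w hwx hwy, hx, hy, hw])
    · exact key x y hxy 0 (by omega) (by omega)
        (fun w hwx hwy hw => by simp [St4.pat, tri w hwx hwy, hx, hy, hw])
    · exact key x y hxy 2 (by omega) (by omega)
        (fun w hwx hwy hw => by simp [St4.pat, tri w hwx hwy, hx, hy, hw])
    · exact key x y hxy 0 (by omega) (by omega)
        (fun w hwx hwy hw => by simp [St4.pat, tri w hwx hwy, hx, hy, hw])
    · exact key x y hxy 2 (by omega) (by omega)
        (fun w hwx hwy hw => by simp [St4.pat, tri w hwx hwy, hx, hy, hw])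
    · exact key x y hxy 1 (by omega) (by omega)
        (fun w hwx hwy hw => by simp [St4.pat, tri w hwx hwy, hx, hy, hw])
    · exact key x y hxy 2 (by omega) (by omega)
        (fun w hwx hwy hw => by simp [St4.pat, tri w hwx hwy, hx, hy, hw])
    · exact key x y hxy 1 (by omega) (by omega)
        (fun w hwx hwy hw => by simp [St4.pat, tri w hwx hwy, hx, hy, hw])
    · exact key x y hxy 0 (by omega) (by omega)
        (fun w hwx hwy hw => by simp [St4.pat, tri w hwx hwy, hx, hy, hw])
  refine ⟨E, fun e he => ((hmemE e).1 he).1, hdeg, ?_, ?_⟩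
  · -- a pair with codegree exactly n/3 - 1
    set x : Fin n := ⟨0, by omega⟩ with hxdef
    set y : Fin n := ⟨a, by omega⟩ with hydef
    have hxy : x ≠ y := by
      intro h
      have : (0 : ℕ) = a := congrArg Fin.val h
      omega
    have hrx : St4.reg n x = 0 := (St4.reg0_iff n x).2 (by simp [hxdef]; omega)
    have hry : St4.reg n y = 1 := (St4.reg1_iff n y).2 (by simp [hydef]; omega)
    refine ⟨x, y, hxy, le_antisymm ?_ (hdeg x y hxy)⟩
    -- upper bound
    have hsub : (E.filter fun e => x ∈ e ∧ y ∈ e) ⊆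
        ((Finset.univ.filter fun v : Fin n => St4.reg n v = 0).erase x).image
          (fun w => {w, x, y}) := by
      intro e he
      rw [Finset.mem_filter] at he
      obtain ⟨heE, hxe, hye⟩ := he
      obtain ⟨hc3, hp⟩ := (hmemE e).1 heE
      have hsub2 : ({x, y} : Finset (Fin n)) ⊆ e := by
        intro v hv; simp only [Finset.mem_insert, Finset.mem_singleton] at hv
        rcases hv with rfl | rfl <;> assumption
      have hcs : (e \ {x, y}).card = 1 := by
        rw [Finset.card_sdiff_of_subset hsub2, hc3,
          Finset.card_insert_of_notMem (by simp [hxy]), Finset.card_singleton]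
      obtain ⟨w, hw⟩ := Finset.card_eq_one.1 hcs
      have hwmem : w ∈ e \ ({x, y} : Finset (Fin n)) := by rw [hw]; simp
      rw [Finset.mem_sdiff, Finset.mem_insert, Finset.mem_singleton] at hwmem
      have hwx : w ≠ x := fun h => hwmem.2 (Or.inl h)
      have hwy : w ≠ y := fun h => hwmem.2 (Or.inr h)
      have hee : e = {w, x, y} := by
        have h1 : ({x, y} : Finset (Fin n)) ∪ (e \ {x, y}) = e :=
          Finset.union_sdiff_of_subset hsub2
        rw [hw] at h1
        rw [← h1]
        ext v
        simp only [Finset.mem_union, Finset.mem_insert, Finset.mem_singleton]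
        tauto
      have hreg : St4.reg n w = 0 := by
        rw [hee] at hp
        have h0 := St4.cnt_insert n 0 w x y hwx hwy hxy
        have h1 := St4.cnt_insert n 1 w x y hwx hwy hxy
        have h2 := St4.cnt_insert n 2 w x y hwx hwy hxy
        rcases St4.reg_cases n w with h | h | h
        · exact h
        · exfalso; simp only [St4.pat] at hp
          simp [h, hrx, hry] at h0 h1 h2; omega
        · exfalso; simp only [St4.pat] at hp
          simp [h, hrx, hry] at h0 h1 h2; omega
      refine Finset.mem_image.2 ⟨w, ?_, hee.symm⟩
      exact Finset.mem_erase.2 ⟨hwx, Finset.mem_filter.2 ⟨Finset.mem_univ _, hreg⟩⟩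
    have hxR0 : x ∈ Finset.univ.filter fun v : Fin n => St4.reg n v = 0 :=
      Finset.mem_filter.2 ⟨Finset.mem_univ _, hrx⟩
    have := Finset.card_le_card hsub
    have h2 := Finset.card_image_le (s := (Finset.univ.filter
      fun v : Fin n => St4.reg n v = 0).erase x)
      (f := fun w => ({w, x, y} : Finset (Fin n)))
    rw [Finset.card_erase_of_mem hxR0, hR0] at h2
    omega
  · -- tight components
    intro e he
    obtain ⟨hc3, hp⟩ := (hmemE e).1 he
    -- invariant along touching chains
    have inv : ∀ i, i < 3 → St4.cnt n i e = 2 → ∀ f, f ∈ E →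
        Relation.ReflTransGen (Touches E) e f → St4.cnt n i f = 2 := by
      intro i hi h2 f hf hrel
      clear hf
      induction hrel with
      | refl => exact h2
      | tail hbc htouch ih =>
        rename_i u w
        obtain ⟨huE, hwE, hint⟩ := htouch
        obtain ⟨hcu, hpu⟩ := (hmemE u).1 huE
        obtain ⟨hcw, hpw⟩ := (hmemE w).1 hwE
        have hd := St4.touch_same hpu hpw hcu hcw hint
        have hsu := St4.cnt_sum n u
        have hsw := St4.cnt_sum n w
        rw [hcu] at hsu; rw [hcw] at hsw
        have ihu := ih
        rcases hd with ⟨p, q⟩ | ⟨p, q⟩ | ⟨p, q⟩ <;> interval_cases i <;> omega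
    have main : ∀ i, i < 3 → St4.cnt n i e = 2 →
        ∀ S : Finset (Fin n),
        (∀ f, f ∈ E → St4.cnt n i f = 2 → ∀ v ∈ f, v ∈ S) →
        ({v : Fin n | ∃ f ∈ E, Relation.ReflTransGen (Touches E) e f ∧ v ∈ f}).ncard ≤ S.card := by
      intro i hi h2 S hS
      have hsub : {v : Fin n | ∃ f ∈ E, Relation.ReflTransGen (Touches E) e f ∧ v ∈ f}
          ⊆ (S : Set (Fin n)) := by
        rintro v ⟨f, hfE, hrel, hvf⟩
        exact hS f hfE (inv i hi h2 f hfE hrel) v hvf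
      calc ({v : Fin n | ∃ f ∈ E, Relation.ReflTransGen (Touches E) e f ∧ v ∈ f}).ncard
          ≤ (S : Set (Fin n)).ncard := Set.ncard_le_ncard hsub (S.finite_toSet)
        _ = S.card := Set.ncard_coe_finset S
    have hse := St4.cnt_sum n e
    rw [hc3] at hse
    rcases hp with ⟨h1, h2⟩ | ⟨h1, h2⟩ | ⟨h1, h2⟩
    · -- type XXY : spans regions 0 and 1, i.e. val < b
      have hcard : (Finset.univ.filter fun v : Fin n => v.val < b).card = b :=
        St4.card_lt n b (by omega)
      have := main 0 (by omega) h1 (Finset.univ.filter fun v : Fin n => v.val < b) ?_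
      · omega
      · intro f hfE hf2 v hvf
        obtain ⟨hcf, hpf⟩ := (hmemE f).1 hfE
        have hsf := St4.cnt_sum n f
        rw [hcf] at hsf
        have hz : St4.cnt n 2 f = 0 := by
          rcases hpf with ⟨g1, g2⟩ | ⟨g1, g2⟩ | ⟨g1, g2⟩ <;> omega
        have := St4.not_reg hz hvf
        rcases St4.reg_cases n v with h | h | h
        · simp only [Finset.mem_filter]
          exact ⟨Finset.mem_univ _, by have := (St4.reg0_iff n v).1 h; omega⟩
        · simp only [Finset.mem_filter]
          exact ⟨Finset.mem_univ _, ((St4.reg1_iff n v).1 h).2⟩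
        · exact absurd h this
    · -- type YYZ : spans regions 1 and 2, i.e. a ≤ val
      have hcard : (Finset.univ.filter fun v : Fin n => a ≤ v.val ∧ v.val < n).card = n - a :=
        St4.card_ico n a n le_rfl
      have := main 1 (by omega) h1
        (Finset.univ.filter fun v : Fin n => a ≤ v.val ∧ v.val < n) ?_
      · omega
      · intro f hfE hf2 v hvf
        obtain ⟨hcf, hpf⟩ := (hmemE f).1 hfE
        have hsf := St4.cnt_sum n f
        rw [hcf] at hsf
        have hz : St4.cnt n 0 f = 0 := by
          rcases hpf with ⟨g1, g2⟩ | ⟨g1, g2⟩ | ⟨g1, g2⟩ <;> omega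
        have hne := St4.not_reg hz hvf
        simp only [Finset.mem_filter]
        refine ⟨Finset.mem_univ _, ?_, v.isLt⟩
        rcases St4.reg_cases n v with h | h | h
        · exact absurd h hne
        · exact ((St4.reg1_iff n v).1 h).1
        · have := (St4.reg2_iff n v).1 h; omega
    · -- type ZZX : spans regions 2 and 0
      have hcard : (Finset.univ.filter fun v : Fin n => v.val < a ∨ b ≤ v.val).card
          = n - (b - a) := by
        have hsplit := Finset.card_filter_add_card_filter_not
          (s := (Finset.univ : Finset (Fin n))) (p := fun v => a ≤ v.val ∧ v.val < b)
        have heq : (Finset.univ.filter fun v : Fin n => ¬(a ≤ v.val ∧ v.val < b))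
            = Finset.univ.filter fun v : Fin n => v.val < a ∨ b ≤ v.val := by
          apply Finset.filter_congr; intro v _
          simp only [not_and, not_lt, eq_iff_iff]
          omega
        rw [heq, St4.card_ico n a b (by omega), Finset.card_univ, Fintype.card_fin] at hsplit
        omega
      have := main 2 (by omega) h1
        (Finset.univ.filter fun v : Fin n => v.val < a ∨ b ≤ v.val) ?_
      · omega
      · intro f hfE hf2 v hvf
        obtain ⟨hcf, hpf⟩ := (hmemE f).1 hfE
        have hsf := St4.cnt_sum n f
        rw [hcf] at hsf
        have hz : St4.cnt n 1 f = 0 := by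
          rcases hpf with ⟨g1, g2⟩ | ⟨g1, g2⟩ | ⟨g1, g2⟩ <;> omega
        have hne := St4.not_reg hz hvf
        simp only [Finset.mem_filter]
        refine ⟨Finset.mem_univ _, ?_⟩
        rcases St4.reg_cases n v with h | h | h
        · exact Or.inl ((St4.reg0_iff n v).1 h)
        · exact absurd h hne
        · exact Or.inr ((St4.reg2_iff n v).1 h)
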